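/- Fix an integer n ≥ 1. For every g ∈ Γ₁(t) there exist polynomials c, d ∈ A of degree < n−1 and a standard lift h for (c,d) of level tⁿ such that g·h⁻¹ ∈ Γ₁(tⁿ). Moreover, if c, d, c′, d′ ∈ A all have degree < n−1 and h, h′ are standard lifts for (c,d) and (c′,d′) respectively, then h′·h⁻¹ ∈ Γ₁(tⁿ) if and only if c = c′ and d = d′. In other words, the standard lifts h_{(c,d)} with c, d ranging over polynomials of degree < n−1 form a complete set of representatives of Γ₁(tⁿ)\Γ₁(t). -/

import Mathlib

open Polynomial Matrix

/-- `Γ₁(𝔫)` as a set of 2×2 matrices over `A = F[t]`: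
matrices of determinant 1 congruent to `[[1,*],[0,1]]` mod `𝔫`. -/
def Gamma1 (F : Type*) [Field F] (n : Polynomial F) :
    Set (Matrix (Fin 2) (Fin 2) (Polynomial F)) :=
  {γ | γ.det = 1 ∧ n ∣ γ 1 0 ∧ n ∣ (γ 0 0 - 1) ∧ n ∣ (γ 1 1 - 1)}

/-- A standard lift `h = h_{(c,d)}` of level `tⁿ`: an element of `SL₂(A)` with
`h₁₂ ≡ 0`, `h₂₁ ≡ tc`, `h₂₂ ≡ 1 + td` and `h₁₁(1+td) ≡ 1 (mod tⁿ)`. -/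
def IsStdLift (F : Type*) [Field F] (n : ℕ) (c d : Polynomial F)
    (h : Matrix (Fin 2) (Fin 2) (Polynomial F)) : Prop :=
  h.det = 1 ∧ (X : Polynomial F) ^ n ∣ h 0 1 ∧
    (X : Polynomial F) ^ n ∣ (h 1 0 - X * c) ∧
    (X : Polynomial F) ^ n ∣ (h 1 1 - (1 + X * d)) ∧
    (X : Polynomial F) ^ n ∣ (h 0 0 * (1 + X * d) - 1)

lemma inv_fin_two_of_det_one {F : Type*} [Field F]
    {h : Matrix (Fin 2) (Fin 2) (Polynomial F)} (hh : h.det = 1) :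
    h⁻¹ = !![h 1 1, -(h 0 1); -(h 1 0), h 0 0] := by
  rw [Matrix.inv_def, hh, Ring.inverse_one, one_smul, Matrix.adjugate_fin_two]

/-- Key lemma: if `h` satisfies the standard-lift congruences for `(c,d)` and `g` has
determinant 1 with matching lower-row congruences, then `g * h⁻¹ ∈ Γ₁(Xⁿ)`. -/
lemma key_lemma {F : Type*} [Field F] (n : ℕ) (c d : Polynomial F)
    (g h : Matrix (Fin 2) (Fin 2) (Polynomial F))
    (hg : g.det = 1) (hh : h.det = 1)
    (h01 : (X : Polynomial F) ^ n ∣ h 0 1)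
    (h10 : (X : Polynomial F) ^ n ∣ (h 1 0 - X * c))
    (h11 : (X : Polynomial F) ^ n ∣ (h 1 1 - (1 + X * d)))
    (h00 : (X : Polynomial F) ^ n ∣ (h 0 0 * (1 + X * d) - 1))
    (g10 : (X : Polynomial F) ^ n ∣ (g 1 0 - X * c))
    (g11 : (X : Polynomial F) ^ n ∣ (g 1 1 - (1 + X * d))) :
    g * h⁻¹ ∈ Gamma1 F ((X : Polynomial F) ^ n) := by
  have hinv := inv_fin_two_of_det_one hh
  have hdg : g 0 0 * g 1 1 - g 0 1 * g 1 0 = 1 := by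
    rw [← Matrix.det_fin_two]; exact hg
  have e00 : (g * h⁻¹) 0 0 = g 0 0 * h 1 1 + g 0 1 * (-(h 1 0)) := by
    rw [hinv]; simp [Matrix.mul_apply, Fin.sum_univ_two]
  have e10 : (g * h⁻¹) 1 0 = g 1 0 * h 1 1 + g 1 1 * (-(h 1 0)) := by
    rw [hinv]; simp [Matrix.mul_apply, Fin.sum_univ_two]
  have e11 : (g * h⁻¹) 1 1 = g 1 0 * (-(h 0 1)) + g 1 1 * h 0 0 := by
    rw [hinv]; simp [Matrix.mul_apply, Fin.sum_univ_two]
  refine ⟨?_, ?_, ?_, ?_⟩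
  · rw [Matrix.det_mul, hg, Matrix.det_nonsing_inv, hh, Ring.inverse_one, one_mul]
  · rw [e10]
    have eq1 : g 1 0 * h 1 1 + g 1 1 * (-(h 1 0)) =
        (g 1 0 - X * c) * h 1 1 + (X * c) * (h 1 1 - (1 + X * d))
          - (1 + X * d) * (h 1 0 - X * c) - (g 1 1 - (1 + X * d)) * h 1 0 := by ring
    rw [eq1]
    exact dvd_sub (dvd_sub (dvd_add (g10.mul_right _) (h11.mul_left _)) (h10.mul_left _))
      (g11.mul_right _)
  · rw [e00]
    have eq1 : g 0 0 * h 1 1 + g 0 1 * (-(h 1 0)) - 1 =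
        g 0 0 * (h 1 1 - (1 + X * d)) - g 0 1 * (h 1 0 - X * c)
          - g 0 0 * (g 1 1 - (1 + X * d)) + g 0 1 * (g 1 0 - X * c) := by
      linear_combination hdg
    rw [eq1]
    exact dvd_add (dvd_sub (dvd_sub (h11.mul_left _) (h10.mul_left _)) (g11.mul_left _))
      (g10.mul_left _)
  · rw [e11]
    have eq1 : g 1 0 * (-(h 0 1)) + g 1 1 * h 0 0 - 1 =
        (-(g 1 0)) * (h 0 1) + (g 1 1 - (1 + X * d)) * h 0 0
          + (h 0 0 * (1 + X * d) - 1) := by ring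
    rw [eq1]
    exact dvd_add (dvd_add (h01.mul_left _) (g11.mul_right _)) h00

theorem stmt4 (p : ℕ) (hp : p.Prime) (F : Type*) [Field F] [Fintype F] [CharP F p]
    (n : ℕ) (hn : 1 ≤ n) :
    (∀ g ∈ Gamma1 F (X : Polynomial F),
      ∃ c d : Polynomial F, c.degree < ((n - 1 : ℕ) : WithBot ℕ) ∧
        d.degree < ((n - 1 : ℕ) : WithBot ℕ) ∧
        ∃ h : Matrix (Fin 2) (Fin 2) (Polynomial F),
          IsStdLift F n c d h ∧ g * h⁻¹ ∈ Gamma1 F ((X : Polynomial F) ^ n)) ∧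
    (∀ c d c' d' : Polynomial F, ∀ h h' : Matrix (Fin 2) (Fin 2) (Polynomial F),
      c.degree < ((n - 1 : ℕ) : WithBot ℕ) → d.degree < ((n - 1 : ℕ) : WithBot ℕ) →
      c'.degree < ((n - 1 : ℕ) : WithBot ℕ) → d'.degree < ((n - 1 : ℕ) : WithBot ℕ) →
      IsStdLift F n c d h → IsStdLift F n c' d' h' →
      (h' * h⁻¹ ∈ Gamma1 F ((X : Polynomial F) ^ n) ↔ c = c' ∧ d = d')) := by
  have hXn : (X : Polynomial F) ^ n = X * X ^ (n - 1) := by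
    rw [← pow_succ']; congr 1; omega
  have hXdvd : (X : Polynomial F) ∣ X ^ n := dvd_pow_self X (by omega)
  constructor
  · -- existence
    rintro g ⟨hdet, ⟨c₀, hc₀⟩, -, ⟨d₀, hd₀⟩⟩
    have hQ : ((X : Polynomial F) ^ (n - 1)).Monic := monic_X_pow _
    set c : Polynomial F := c₀ %ₘ X ^ (n - 1) with hc
    set d : Polynomial F := d₀ %ₘ X ^ (n - 1) with hd
    have hcdeg : c.degree < ((n - 1 : ℕ) : WithBot ℕ) := by
      have := degree_modByMonic_lt c₀ hQ
      rwa [degree_X_pow] at this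
    have hddeg : d.degree < ((n - 1 : ℕ) : WithBot ℕ) := by
      have := degree_modByMonic_lt d₀ hQ
      rwa [degree_X_pow] at this
    have hcQ : c₀ - c = X ^ (n - 1) * (c₀ /ₘ X ^ (n - 1)) := by
      rw [hc, modByMonic_eq_sub_mul_div c₀ (X ^ (n - 1))]; ring
    have hdQ : d₀ - d = X ^ (n - 1) * (d₀ /ₘ X ^ (n - 1)) := by
      rw [hd, modByMonic_eq_sub_mul_div d₀ (X ^ (n - 1))]; ring
    have g10 : (X : Polynomial F) ^ n ∣ (g 1 0 - X * c) := by
      refine ⟨c₀ /ₘ X ^ (n - 1), ?_⟩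
      rw [hXn]; linear_combination hc₀ + X * hcQ
    have g11 : (X : Polynomial F) ^ n ∣ (g 1 1 - (1 + X * d)) := by
      refine ⟨d₀ /ₘ X ^ (n - 1), ?_⟩
      rw [hXn]; linear_combination hd₀ + X * hdQ
    -- construct the standard lift
    set s : Polynomial F := -(-d) ^ n with hs
    set a : Polynomial F := ∑ i ∈ Finset.range n, (-(X * d)) ^ i with ha
    have hau : a * (1 + X * d) = 1 + X ^ n * s := by
      have hx : (-(X * (d : Polynomial F))) ^ n = X ^ n * (-d) ^ n := by
        rw [show -(X * d) = X * (-d) by ring, mul_pow]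
      rw [ha, hs]
      linear_combination (-1 : Polynomial F) * geom_sum_mul (-(X * d)) n - hx
    set z : Polynomial F := (X * c - s) * (1 + X * d) with hz
    have hlift : IsStdLift F n c d
        !![a, X ^ n; z * a + s, z * X ^ n + (1 + X * d)] := by
      refine ⟨?_, ?_, ?_, ?_, ?_⟩
      · rw [Matrix.det_fin_two_of]; linear_combination hau
      · show (X : Polynomial F) ^ n ∣ X ^ n
        exact dvd_rfl
      · show (X : Polynomial F) ^ n ∣ (z * a + s - X * c)
        refine ⟨s * (X * c - s), ?_⟩
        rw [hz]; linear_combination (X * c - s) * hau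
      · show (X : Polynomial F) ^ n ∣ (z * X ^ n + (1 + X * d) - (1 + X * d))
        exact ⟨z, by ring⟩
      · show (X : Polynomial F) ^ n ∣ (a * (1 + X * d) - 1)
        exact ⟨s, by linear_combination hau⟩
    refine ⟨c, d, hcdeg, hddeg, _, hlift, ?_⟩
    obtain ⟨hdh, h01, h10, h11, h00⟩ := hlift
    exact key_lemma n c d g _ hdet hdh h01 h10 h11 h00 g10 g11
  · -- uniqueness
    rintro c d c' d' h h' hcdeg hddeg hc'deg hd'deg
      ⟨hh, h01, h10, h11, h00⟩ ⟨hh', h01', h10', h11', h00'⟩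
    have hXne : (X : Polynomial F) ≠ 0 := X_ne_zero
    have hXnotunit : ¬ IsUnit (X : Polynomial F) := Polynomial.not_isUnit_X
    have hndvd00 : ¬ (X : Polynomial F) ∣ h 0 0 := by
      intro hdvd
      refine hXnotunit (isUnit_of_dvd_one ?_)
      have h1 : (X : Polynomial F) ∣ h 0 0 * (1 + X * d) - 1 := hXdvd.trans h00
      have h2 : (X : Polynomial F) ∣ h 0 0 * (1 + X * d) := hdvd.mul_right _
      have := dvd_sub h2 h1
      simpa using this
    have hndvdu : ¬ (X : Polynomial F) ∣ (1 + X * d) := by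
      intro hdvd
      refine hXnotunit (isUnit_of_dvd_one ?_)
      have h2 : (X : Polynomial F) ∣ X * d := dvd_mul_right _ _
      have := dvd_sub hdvd h2
      simpa using this
    constructor
    · rintro ⟨hk, hk10, hk00, hk11⟩
      have hinv := inv_fin_two_of_det_one hh
      have e10 : (h' * h⁻¹) 1 0 = h' 1 0 * h 1 1 + h' 1 1 * (-(h 1 0)) := by
        rw [hinv]; simp [Matrix.mul_apply, Fin.sum_univ_two]
      have e11 : (h' * h⁻¹) 1 1 = h' 1 0 * (-(h 0 1)) + h' 1 1 * h 0 0 := by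
        rw [hinv]; simp [Matrix.mul_apply, Fin.sum_univ_two]
      rw [e10] at hk10; rw [e11] at hk11
      -- first show d' = d
      have key_d : (X : Polynomial F) ^ n ∣ (X * (d' - d)) * h 0 0 := by
        have eq1 : (X * (d' - d)) * h 0 0 =
            (h' 1 0 * (-(h 0 1)) + h' 1 1 * h 0 0 - 1)
              + h' 1 0 * h 0 1 - (h' 1 1 - (1 + X * d')) * h 0 0
              - (h 0 0 * (1 + X * d) - 1) := by ring
        rw [eq1]
        exact dvd_sub (dvd_sub (dvd_add hk11 (h01.mul_left _)) (h11'.mul_right _)) h00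
      have hcop : IsCoprime ((X : Polynomial F) ^ n) (h 0 0) :=
        ((Polynomial.prime_X.coprime_iff_not_dvd).2 hndvd00).pow_left
      have hdd : (X : Polynomial F) ^ (n - 1) ∣ (d' - d) := by
        have := hcop.dvd_of_dvd_mul_right key_d
        rw [hXn] at this
        exact (mul_dvd_mul_iff_left hXne).1 this
      have hd_eq : d' = d := by
        have h0 : d' - d = 0 :=
          Polynomial.eq_zero_of_dvd_of_degree_lt hdd
            (by rw [degree_X_pow]; exact (degree_sub_le d' d).trans_lt (max_lt hd'deg hddeg))
        exact sub_eq_zero.1 h0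
      rw [hd_eq] at h11'
      -- now show c' = c
      have key_c : (X : Polynomial F) ^ n ∣ (X * (c' - c)) * (1 + X * d) := by
        have eq1 : (X * (c' - c)) * (1 + X * d) =
            (h' 1 0 * h 1 1 + h' 1 1 * (-(h 1 0)))
              - (h' 1 0 - X * c') * h 1 1 - (X * c') * (h 1 1 - (1 + X * d))
              + (h' 1 1 - (1 + X * d)) * h 1 0 + (1 + X * d) * (h 1 0 - X * c) := by ring
        rw [eq1]
        exact dvd_add (dvd_add (dvd_sub (dvd_sub hk10 (h10'.mul_right _))
          (h11.mul_left _)) (h11'.mul_right _)) (h10.mul_left _)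
      have hcopu : IsCoprime ((X : Polynomial F) ^ n) (1 + X * d) :=
        ((Polynomial.prime_X.coprime_iff_not_dvd).2 hndvdu).pow_left
      have hcc : (X : Polynomial F) ^ (n - 1) ∣ (c' - c) := by
        have := hcopu.dvd_of_dvd_mul_right key_c
        rw [hXn] at this
        exact (mul_dvd_mul_iff_left hXne).1 this
      have hc_eq : c' = c := by
        have h0 : c' - c = 0 :=
          Polynomial.eq_zero_of_dvd_of_degree_lt hcc
            (by rw [degree_X_pow]; exact (degree_sub_le c' c).trans_lt (max_lt hc'deg hcdeg))
        exact sub_eq_zero.1 h0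
      exact ⟨hc_eq.symm, hd_eq.symm⟩
    · rintro ⟨rfl, rfl⟩
      exact key_lemma n c d h' h hh' hh h01 h10 h11 h00 h10' h11'
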